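/- Let Z be a real-valued random variable with CDF F satisfying E|Z|^p < ∞ for some p > 2. Then ∫_{−∞}^{+∞} √(F(z)(1 − F(z))) dz ≤ (2p/(p−2)) (E|Z|^p)^{1/p}. -/

import Mathlib

open MeasureTheory ProbabilityTheory

/-- If `Z` is a real random variable with CDF `F` and `E|Z|ᵖ < ∞` for some
`p > 2`, then `∫_ℝ √(F(z)(1−F(z))) dz ≤ (2p/(p−2)) (E|Z|ᵖ)^{1/p}`. -/
theorem stmt3
    {Ωs : Type*} [MeasureSpace Ωs] [IsProbabilityMeasure (ℙ : Measure Ωs)]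
    (Z : Ωs → ℝ) (hmeas : Measurable Z)
    (F : ℝ → ℝ) (hF : ∀ z, F z = ((ℙ : Measure Ωs) {ω | Z ω ≤ z}).toReal)
    (p : ℝ) (hp : 2 < p)
    (hmom : Integrable (fun ω => |Z ω| ^ p) ℙ) :
    ∫⁻ z : ℝ, ENNReal.ofReal (Real.sqrt (F z * (1 - F z))) ≤
      ENNReal.ofReal ((2 * p / (p - 2)) * (∫ ω : Ωs, |Z ω| ^ p ∂ℙ) ^ (1 / p)) := by
  classical
  set I : ℝ := ∫ ω : Ωs, |Z ω| ^ p ∂ℙ with hIdef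
  have hInn : 0 ≤ I := integral_nonneg fun ω => Real.rpow_nonneg (abs_nonneg _) _
  have hp0 : (0:ℝ) < p := by linarith
  have hF0 : ∀ z, 0 ≤ F z := fun z => by rw [hF]; exact ENNReal.toReal_nonneg
  have hF1 : ∀ z, F z ≤ 1 := fun z => by
    rw [hF]
    have h1 : ((ℙ : Measure Ωs) {ω | Z ω ≤ z}) ≤ 1 := prob_le_one
    simpa using ENNReal.toReal_mono (by simp) h1
  have hFmono : Monotone F := by
    intro a b hab
    rw [hF, hF]
    exact ENNReal.toReal_mono (measure_ne_top _ _)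
      (measure_mono fun ω h => le_trans h hab)
  have hfmeas : Measurable fun z => ENNReal.ofReal (Real.sqrt (F z * (1 - F z))) := by
    exact ((hFmono.measurable.mul (measurable_const.sub hFmono.measurable)).sqrt).ennreal_ofReal
  -- Markov inequality
  have markov : ∀ c : ℝ, 0 < c → ((ℙ : Measure Ωs) {ω | c ≤ |Z ω|}).toReal ≤ I / c ^ p := by
    intro c hc
    have hsub : {ω | c ≤ |Z ω|} ⊆ {ω | c ^ p ≤ |Z ω| ^ p} := fun ω h =>
      Real.rpow_le_rpow hc.le h hp0.le
    have h1 := mul_meas_ge_le_integral_of_nonneg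
      (μ := (ℙ : Measure Ωs)) (f := fun ω => |Z ω| ^ p)
      (ae_of_all _ fun ω => Real.rpow_nonneg (abs_nonneg _) p) hmom (c ^ p)
    have hcp : (0:ℝ) < c ^ p := Real.rpow_pos_of_pos hc p
    have h2 : ((ℙ : Measure Ωs) {ω | c ≤ |Z ω|}).toReal ≤
        ((ℙ : Measure Ωs) {ω | c ^ p ≤ |Z ω| ^ p}).toReal :=
      ENNReal.toReal_mono (measure_ne_top _ _) (measure_mono hsub)
    simp only [Measure.real] at h1
    rw [← hIdef] at h1
    rw [le_div_iff₀ hcp]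
    nlinarith [h1, h2, hcp]
  -- tail bounds on F
  have tail_pos : ∀ z : ℝ, 0 < z → 1 - F z ≤ I / z ^ p := by
    intro z hz
    set s := {ω | Z ω ≤ z} with hs_def
    have hs : MeasurableSet s := hmeas measurableSet_Iic
    have hsum : ((ℙ : Measure Ωs) s).toReal + ((ℙ : Measure Ωs) sᶜ).toReal = 1 := by
      rw [← ENNReal.toReal_add (measure_ne_top _ _) (measure_ne_top _ _),
        measure_add_measure_compl hs]
      simp
    have hcompl : sᶜ ⊆ {ω | z ≤ |Z ω|} := by
      intro ω h
      simp only [hs_def, Set.mem_compl_iff, Set.mem_setOf_eq, not_le] at h ⊢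
      exact le_trans h.le (le_abs_self _)
    have h2 : ((ℙ : Measure Ωs) sᶜ).toReal ≤ I / z ^ p :=
      le_trans (ENNReal.toReal_mono (measure_ne_top _ _) (measure_mono hcompl)) (markov z hz)
    rw [hF]
    change 1 - ((ℙ : Measure Ωs) s).toReal ≤ _
    linarith
  have tail_neg : ∀ z : ℝ, 0 < z → F (-z) ≤ I / z ^ p := by
    intro z hz
    have hcompl : {ω | Z ω ≤ -z} ⊆ {ω | z ≤ |Z ω|} := by
      intro ω h
      simp only [Set.mem_setOf_eq] at h ⊢
      calc z ≤ -Z ω := by linarith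
        _ ≤ |Z ω| := neg_le_abs _
    rw [hF]
    exact le_trans (ENNReal.toReal_mono (measure_ne_top _ _) (measure_mono hcompl)) (markov z hz)
  rcases eq_or_lt_of_le hInn with h0 | hIpos
  · -- degenerate case I = 0 : the integrand vanishes a.e.
    have hzero : ∀ z : ℝ, z ≠ 0 → Real.sqrt (F z * (1 - F z)) = 0 := by
      intro z hz
      rcases lt_or_gt_of_ne hz with hneg | hpos
      · have h1 := tail_neg (-z) (by linarith)
        rw [neg_neg, ← h0] at h1
        have h2 : F z ≤ 0 := by
          have : (0:ℝ) / (-z) ^ p = 0 := by simp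
          linarith [h1, this.le, this.ge]
        have := hF0 z
        rw [show F z = 0 by linarith]
        simp
      · have h1 := tail_pos z hpos
        rw [← h0] at h1
        have h2 : 1 - F z ≤ 0 := by
          have : (0:ℝ) / z ^ p = 0 := by simp
          linarith [h1, this.le, this.ge]
        have := hF1 z
        rw [show F z = 1 by linarith]
        simp
    have hae : ∀ᵐ z : ℝ, z ≠ 0 := by
      rw [ae_iff]
      have : {z : ℝ | ¬ z ≠ 0} = {0} := by ext z; simp
      rw [this]
      exact measure_singleton 0
    have : ∫⁻ z : ℝ, ENNReal.ofReal (Real.sqrt (F z * (1 - F z))) = 0 := by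
      rw [lintegral_eq_zero_iff hfmeas]
      filter_upwards [hae] with z hz
      simp [hzero z hz]
    rw [this]
    exact zero_le
  -- main case I > 0
  set M : ℝ := I ^ (1/p) with hMdef
  have hM : 0 < M := Real.rpow_pos_of_pos hIpos _
  have ha : -(p/2) < -1 := by linarith
  have hsqrtI : Real.sqrt I = M ^ (p/2) := by
    rw [Real.sqrt_eq_rpow, hMdef, ← Real.rpow_mul hInn]
    congr 1
    field_simp
  -- sqrt tail bound
  have sq_bound : ∀ x : ℝ, 0 < x → ∀ t : ℝ, t ≤ I / x ^ p →
      Real.sqrt t ≤ Real.sqrt I * x ^ (-(p/2)) := by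
    intro x hx t ht
    have key : Real.sqrt (I / x ^ p) = Real.sqrt I * x ^ (-(p/2)) := by
      rw [Real.sqrt_div hInn, Real.rpow_neg hx.le, div_eq_mul_inv]
      congr 2
      rw [Real.sqrt_eq_rpow, ← Real.rpow_mul hx.le]
      congr 1
      ring
    rw [← key]
    exact Real.sqrt_le_sqrt ht
  -- the tail integral
  have tail_int : ∫⁻ x in Set.Ioi M, ENNReal.ofReal (Real.sqrt I * x ^ (-(p/2)))
      = ENNReal.ofReal (2 * M / (p - 2)) := by
    have hint : IntegrableOn (fun x : ℝ => Real.sqrt I * x ^ (-(p/2))) (Set.Ioi M) :=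
      (integrableOn_Ioi_rpow_of_lt ha hM).const_mul _
    rw [← ofReal_integral_eq_lintegral_ofReal hint ?_]
    · congr 1
      rw [MeasureTheory.integral_const_mul, integral_Ioi_rpow_of_lt ha hM, hsqrtI]
      have hMM : M ^ (p/2) * M ^ (-(p/2) + 1) = M := by
        rw [← Real.rpow_add hM]
        norm_num
      have hne : -(p/2) + 1 ≠ 0 := by intro h; linarith
      calc M ^ (p/2) * (-M ^ (-(p/2) + 1) / (-(p/2) + 1))
          = (M ^ (p/2) * M ^ (-(p/2) + 1)) * (-1 / (-(p/2) + 1)) := by ring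
        _ = M * (-1 / (-(p/2) + 1)) := by rw [hMM]
        _ = 2 * M / (p - 2) := by
            have h2 : -1 / (-(p/2) + 1) = 2 / (p - 2) := by
              rw [div_eq_div_iff hne (by linarith : p - 2 ≠ 0)]
              ring
            rw [h2]; ring
    · filter_upwards [ae_restrict_mem measurableSet_Ioi] with x hx
      have hx0 : 0 < x := lt_trans hM hx
      exact mul_nonneg (Real.sqrt_nonneg _) (Real.rpow_nonneg hx0.le _)
  have hgmeas : Measurable fun x : ℝ => ENNReal.ofReal (Real.sqrt I * x ^ (-(p/2))) := by
    fun_prop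
  -- pieces
  have mid : ∫⁻ z in Set.Icc (-M) M, ENNReal.ofReal (Real.sqrt (F z * (1 - F z)))
      ≤ ENNReal.ofReal (2 * M) := by
    calc ∫⁻ z in Set.Icc (-M) M, ENNReal.ofReal (Real.sqrt (F z * (1 - F z)))
        ≤ ∫⁻ _ in Set.Icc (-M) M, (1:ENNReal) := by
          refine setLIntegral_mono measurable_const fun z _ => ?_
          rw [show (1:ENNReal) = ENNReal.ofReal 1 by simp]
          apply ENNReal.ofReal_le_ofReal
          rw [Real.sqrt_le_one]
          nlinarith [hF0 z, hF1 z]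
      _ = volume (Set.Icc (-M) M) := by simp
      _ = ENNReal.ofReal (2 * M) := by rw [Real.volume_Icc]; congr 1; ring
  have pos_tail : ∫⁻ z in Set.Ioi M, ENNReal.ofReal (Real.sqrt (F z * (1 - F z)))
      ≤ ENNReal.ofReal (2 * M / (p - 2)) := by
    rw [← tail_int]
    refine setLIntegral_mono hgmeas fun x hx => ?_
    have hx0 : 0 < x := lt_trans hM hx
    apply ENNReal.ofReal_le_ofReal
    refine sq_bound x hx0 _ ?_
    calc F x * (1 - F x) ≤ 1 * (1 - F x) := by nlinarith [hF0 x, hF1 x]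
      _ = 1 - F x := one_mul _
      _ ≤ I / x ^ p := tail_pos x hx0
  have neg_map : ∫⁻ z in Set.Iio (-M), ENNReal.ofReal (Real.sqrt (F z * (1 - F z)))
      = ∫⁻ x in Set.Ioi M, ENNReal.ofReal (Real.sqrt (F (-x) * (1 - F (-x)))) := by
    have hemb : MeasurableEmbedding (fun x : ℝ => -x) :=
      (Homeomorph.neg ℝ).measurableEmbedding
    have hrestr : (volume : Measure ℝ).restrict (Set.Iio (-M)) =
        Measure.map (fun x : ℝ => -x) ((volume : Measure ℝ).restrict (Set.Ioi M)) := by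
      conv_lhs => rw [← Measure.map_neg_eq_self (volume : Measure ℝ)]
      rw [Measure.restrict_map measurable_neg measurableSet_Iio]
      congr 1
      ext x
      simp [Set.mem_preimage, neg_lt]
    rw [hrestr, hemb.lintegral_map]
  have neg_tail : ∫⁻ z in Set.Iio (-M), ENNReal.ofReal (Real.sqrt (F z * (1 - F z)))
      ≤ ENNReal.ofReal (2 * M / (p - 2)) := by
    rw [neg_map, ← tail_int]
    refine setLIntegral_mono hgmeas fun x hx => ?_
    have hx0 : 0 < x := lt_trans hM hx
    apply ENNReal.ofReal_le_ofReal
    refine sq_bound x hx0 _ ?_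
    calc F (-x) * (1 - F (-x)) ≤ F (-x) * 1 := by nlinarith [hF0 (-x), hF1 (-x)]
      _ = F (-x) := mul_one _
      _ ≤ I / x ^ p := tail_neg x hx0
  -- assemble
  have hM2 : (0:ℝ) ≤ 2 * M := by linarith
  have hMT : (0:ℝ) ≤ 2 * M / (p - 2) := div_nonneg (by linarith) (by linarith)
  have hcompl : (Set.Icc (-M) M)ᶜ = Set.Iio (-M) ∪ Set.Ioi M := by
    ext x
    simp only [Set.mem_compl_iff, Set.mem_Icc, not_and_or, not_le, Set.mem_union,
      Set.mem_Iio, Set.mem_Ioi]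
  calc ∫⁻ z : ℝ, ENNReal.ofReal (Real.sqrt (F z * (1 - F z)))
      = (∫⁻ z in Set.Icc (-M) M, ENNReal.ofReal (Real.sqrt (F z * (1 - F z)))) +
        ∫⁻ z in (Set.Icc (-M) M)ᶜ, ENNReal.ofReal (Real.sqrt (F z * (1 - F z))) :=
        (lintegral_add_compl _ measurableSet_Icc).symm
    _ ≤ ENNReal.ofReal (2 * M) +
        (ENNReal.ofReal (2 * M / (p - 2)) + ENNReal.ofReal (2 * M / (p - 2))) := by
        refine add_le_add mid ?_
        rw [hcompl]
        exact le_trans (lintegral_union_le _ _ _) (add_le_add neg_tail pos_tail)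
    _ = ENNReal.ofReal (2 * M + (2 * M / (p - 2) + 2 * M / (p - 2))) := by
        rw [← ENNReal.ofReal_add hMT hMT, ← ENNReal.ofReal_add hM2 (by linarith)]
    _ = ENNReal.ofReal (2 * p / (p - 2) * M) := by
        congr 1
        have hpne : p - 2 ≠ 0 := by linarith
        field_simp
        ring
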